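/- Let R be a finite commutative local ring, G = GL_n(R), L the diagonal subgroup, and χ = χ_1 ∘ det restricted to L, i.e., χ = χ_1^{⊗n} for a single character χ_1 of R^×. Then the map g ↦ χ_1(det g)·g extends linearly to an algebra automorphism of C[G] carrying e_χ e_U e_V C[G] e_U e_V e_χ isomorphically onto e_L e_U e_V C[G] e_U e_V e_L; in particular End_G(i(χ)) ≅ End_G(i(1_L)). -/

import Mathlib

open Matrix MonoidAlgebra

namespace PS

variable {n : ℕ} {R : Type*} [CommRing R]

/-- `g` is upper unitriangular. -/
def IsU (g : GL (Fin n) R) : Prop :=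
  (∀ i : Fin n, (g : Matrix (Fin n) (Fin n) R) i i = 1) ∧
    ∀ i j : Fin n, j < i → (g : Matrix (Fin n) (Fin n) R) i j = 0

/-- `g` is lower unitriangular. -/
def IsV (g : GL (Fin n) R) : Prop :=
  (∀ i : Fin n, (g : Matrix (Fin n) (Fin n) R) i i = 1) ∧
    ∀ i j : Fin n, i < j → (g : Matrix (Fin n) (Fin n) R) i j = 0

/-- `g` is diagonal. -/
def IsL (g : GL (Fin n) R) : Prop :=
  ∀ i j : Fin n, i ≠ j → (g : Matrix (Fin n) (Fin n) R) i j = 0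

/-- `g` is a permutation matrix. -/
def IsW (g : GL (Fin n) R) : Prop :=
  ∃ σ : Equiv.Perm (Fin n), (g : Matrix (Fin n) (Fin n) R) = σ.permMatrix R

def Uset (n : ℕ) (R : Type*) [CommRing R] : Set (GL (Fin n) R) := {g | IsU g}
def Vset (n : ℕ) (R : Type*) [CommRing R] : Set (GL (Fin n) R) := {g | IsV g}
def Lset (n : ℕ) (R : Type*) [CommRing R] : Set (GL (Fin n) R) := {g | IsL g}
def Wset (n : ℕ) (R : Type*) [CommRing R] : Set (GL (Fin n) R) := {g | IsW g}

/-- the diagonal element of `GL n R` with unit entries `d`. -/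
def diagGL (d : Fin n → Rˣ) : GL (Fin n) R :=
  ⟨Matrix.diagonal fun i => (d i : R), Matrix.diagonal fun i => ((d i)⁻¹ : Rˣ),
   by rw [Matrix.diagonal_mul_diagonal]; convert Matrix.diagonal_one using 2; simp,
   by rw [Matrix.diagonal_mul_diagonal]; convert Matrix.diagonal_one using 2; simp⟩

/-- the permutation matrix of `σ`, as an element of `GL n R`. -/
def permGL (σ : Equiv.Perm (Fin n)) : GL (Fin n) R :=
  ⟨σ.permMatrix R, (σ⁻¹).permMatrix R,
   by
    simp only [Equiv.Perm.permMatrix, ← PEquiv.toMatrix_trans, ← Equiv.toPEquiv_trans]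
    simp [Equiv.Perm.inv_def, Equiv.self_trans_symm, Equiv.symm_trans_self, Equiv.toPEquiv_refl, PEquiv.toMatrix_refl],
   by
    simp only [Equiv.Perm.permMatrix, ← PEquiv.toMatrix_trans, ← Equiv.toPEquiv_trans]
    simp [Equiv.Perm.inv_def, Equiv.self_trans_symm, Equiv.symm_trans_self, Equiv.toPEquiv_refl, PEquiv.toMatrix_refl]⟩

/-- `H^w = w⁻¹ H w`, as a subset of the group. -/
def conjSet {G : Type*} [Group G] (S : Set G) (w : G) : Set G := {g | w * g * w⁻¹ ∈ S}

/-- the set of adjacent transpositions (standard Coxeter generators) in `S_n`. -/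
def adjT (n : ℕ) : Set (Equiv.Perm (Fin n)) :=
  {σ | ∃ i j : Fin n, (i : ℕ) + 1 = (j : ℕ) ∧ σ = Equiv.swap i j}

/-- the Coxeter word length of a permutation, with respect to adjacent transpositions. -/
noncomputable def permLength {n : ℕ} (σ : Equiv.Perm (Fin n)) : ℕ :=
  sInf {k | ∃ l : List (Equiv.Perm (Fin n)),
    l.length = k ∧ (∀ τ ∈ l, τ ∈ adjT n) ∧ l.prod = σ}

open scoped Classical in
/-- the averaging element `e_S = |S|⁻¹ ∑_{h ∈ S} h` in the complex group algebra. -/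
noncomputable def eAvg {G : Type*} [Group G] [Fintype G] (S : Set G) : MonoidAlgebra ℂ G :=
  (S.toFinset.card : ℂ)⁻¹ • ∑ h ∈ S.toFinset, MonoidAlgebra.of ℂ G h

/-- the reduction-mod-`m` homomorphism `GL_n(R) → GL_n(R/m)` for a local ring `R`. -/
noncomputable def red (n : ℕ) (R : Type*) [CommRing R] [IsLocalRing R] :
    GL (Fin n) R →* GL (Fin n) (IsLocalRing.ResidueField R) :=
  Matrix.GeneralLinearGroup.map (IsLocalRing.residue R)

/-- the congruence kernel `G_0 = ker (GL_n(R) → GL_n(R/m))`. -/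
noncomputable def G0 (n : ℕ) (R : Type*) [CommRing R] [IsLocalRing R] : Set (GL (Fin n) R) :=
  {g | red n R g = 1}

variable [Fintype R] [DecidableEq R]

/-- the primitive idempotent `e_χ = |L|⁻¹ ∑_{l ∈ L} χ(l)⁻¹ l` of `C[L] ⊆ C[G]` attached to the
character `χ` of `L ≅ (Rˣ)^n`. -/
noncomputable def eChi (χ : (Fin n → Rˣ) →* ℂˣ) : MonoidAlgebra ℂ (GL (Fin n) R) :=
  (Fintype.card (Fin n → Rˣ) : ℂ)⁻¹ •
    ∑ d : Fin n → Rˣ, (((χ d)⁻¹ : ℂˣ) : ℂ) • MonoidAlgebra.of ℂ (GL (Fin n) R) (diagGL d)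

/-- the representation `i(χ) ≅ C[G] e_U e_V e_χ`, as a `ℂ`-subspace of `C[G]`
(with `G` acting by left multiplication). -/
noncomputable def Vrep (n : ℕ) (R : Type*) [CommRing R] [Fintype R] [DecidableEq R]
    (χ : (Fin n → Rˣ) →* ℂˣ) : Submodule ℂ (MonoidAlgebra ℂ (GL (Fin n) R)) :=
  LinearMap.range (LinearMap.mulRight ℂ (eAvg (Uset n R) * eAvg (Vset n R) * eChi χ))

/-- the space `Hom_G(i(χ), i(σ))` of `G`-equivariant linear maps, realised as the space of
linear maps `i(χ) → C[G]` whose image lies in `i(σ)` and which intertwine the left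
`G`-actions. -/
noncomputable def HomG (n : ℕ) (R : Type*) [CommRing R] [Fintype R] [DecidableEq R]
    (χ σ : (Fin n → Rˣ) →* ℂˣ) :
    Submodule ℂ (↥(Vrep n R χ) →ₗ[ℂ] MonoidAlgebra ℂ (GL (Fin n) R)) where
  carrier := {f | (∀ x : ↥(Vrep n R χ), f x ∈ Vrep n R σ) ∧
    ∀ (g : GL (Fin n) R) (x y : ↥(Vrep n R χ)),
      (x : MonoidAlgebra ℂ (GL (Fin n) R)) = MonoidAlgebra.of ℂ (GL (Fin n) R) g * y →
        f x = MonoidAlgebra.of ℂ (GL (Fin n) R) g * f y}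
  add_mem' := by
    rintro f g ⟨hf1, hf2⟩ ⟨hg1, hg2⟩
    exact ⟨fun x => add_mem (hf1 x) (hg1 x), fun k x y h => by
      simp only [LinearMap.add_apply, hf2 k x y h, hg2 k x y h, mul_add]⟩
  zero_mem' := ⟨fun x => zero_mem _, fun k x y h => by simp⟩
  smul_mem' := by
    rintro c f ⟨hf1, hf2⟩
    exact ⟨fun x => Submodule.smul_mem _ c (hf1 x), fun k x y h => by
      simp only [LinearMap.smul_apply, hf2 k x y h, Algebra.mul_smul_comm]⟩

end PS

namespace PS

/-- the character `χ = χ₁ ⊗ ⋯ ⊗ χ₁` of `L ≅ (Rˣ)^n` obtained from a single character `χ₁`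
of `Rˣ`. -/
def chiTup {n : ℕ} {R : Type*} [CommRing R] (χ₁ : Rˣ →* ℂˣ) : (Fin n → Rˣ) →* ℂˣ where
  toFun d := ∏ i, χ₁ (d i)
  map_one' := by simp
  map_mul' a b := by simp [Finset.prod_mul_distrib]

end PS

set_option linter.unusedSectionVars false
namespace TwistAux
open PS

variable {n : ℕ} {R : Type*} [CommRing R] [Fintype R] [DecidableEq R]

local notation "A" => MonoidAlgebra ℂ (GL (Fin n) R)

/-- `g ↦ χ₁(det g)` as a character of `GL n R`. -/
noncomputable def detChar (χ₁ : Rˣ →* ℂˣ) : GL (Fin n) R →* ℂˣ :=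
  χ₁.comp Matrix.GeneralLinearGroup.det

/-- the twist algebra homomorphism `g ↦ c(g) • g`. -/
noncomputable def twistHom (c : GL (Fin n) R →* ℂˣ) : A →ₐ[ℂ] A :=
  MonoidAlgebra.lift ℂ A (GL (Fin n) R)
    { toFun := fun g => ((c g : ℂˣ) : ℂ) • MonoidAlgebra.of ℂ (GL (Fin n) R) g
      map_one' := by
        show ((c 1 : ℂˣ) : ℂ) • MonoidAlgebra.of ℂ (GL (Fin n) R) 1 = 1
        rw [_root_.map_one, Units.val_one, one_smul, _root_.map_one]
      map_mul' := fun g h => by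
        simp [MonoidAlgebra.of_apply, MonoidAlgebra.single_mul_single, smul_smul] }

lemma twistHom_of (c : GL (Fin n) R →* ℂˣ) (g : GL (Fin n) R) :
    twistHom c (MonoidAlgebra.of ℂ (GL (Fin n) R) g) =
      ((c g : ℂˣ) : ℂ) • MonoidAlgebra.of ℂ (GL (Fin n) R) g := by
  simp [twistHom]

/-- the twist algebra automorphism `g ↦ c(g) • g`. -/
noncomputable def twistEquiv (c : GL (Fin n) R →* ℂˣ) : A ≃ₐ[ℂ] A :=
  AlgEquiv.ofAlgHom (twistHom c) (twistHom c⁻¹)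
    (MonoidAlgebra.algHom_ext (fun g => by
      show twistHom c (twistHom c⁻¹ (MonoidAlgebra.of ℂ (GL (Fin n) R) g)) = _
      rw [twistHom_of, _root_.map_smul, twistHom_of, smul_smul, ← Units.val_mul,
        MonoidHom.inv_apply, inv_mul_cancel, Units.val_one, one_smul]
      rfl) (Subsingleton.elim _ _))
    (MonoidAlgebra.algHom_ext (fun g => by
      show twistHom c⁻¹ (twistHom c (MonoidAlgebra.of ℂ (GL (Fin n) R) g)) = _
      rw [twistHom_of, _root_.map_smul, twistHom_of, smul_smul, ← Units.val_mul,
        MonoidHom.inv_apply, mul_inv_cancel, Units.val_one, one_smul]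
      rfl) (Subsingleton.elim _ _))

lemma twistEquiv_of (c : GL (Fin n) R →* ℂˣ) (g : GL (Fin n) R) :
    twistEquiv c (MonoidAlgebra.of ℂ (GL (Fin n) R) g) =
      ((c g : ℂˣ) : ℂ) • MonoidAlgebra.of ℂ (GL (Fin n) R) g :=
  twistHom_of c g

lemma twistEquiv_eAvg (c : GL (Fin n) R →* ℂˣ) (S : Set (GL (Fin n) R))
    (h : ∀ g ∈ S, c g = 1) : twistEquiv c (eAvg S) = eAvg S := by
  classical
  simp only [eAvg, _root_.map_smul, map_sum]
  congr 1
  refine Finset.sum_congr rfl fun g hg => ?_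
  rw [twistEquiv_of, h g (Set.mem_toFinset.mp hg), Units.val_one, one_smul]

lemma detChar_of_isU (χ₁ : Rˣ →* ℂˣ) (g : GL (Fin n) R) (h : IsU g) :
    detChar χ₁ g = 1 := by
  have hdet : Matrix.GeneralLinearGroup.det g = (1 : Rˣ) := by
    ext
    rw [Matrix.GeneralLinearGroup.val_det_apply,
      Matrix.det_of_upperTriangular (M := (g : Matrix (Fin n) (Fin n) R)) (fun i j hij => h.2 i j hij)]
    simp [h.1]
  rw [detChar, MonoidHom.comp_apply, hdet, MonoidHom.map_one]

lemma detChar_of_isV (χ₁ : Rˣ →* ℂˣ) (g : GL (Fin n) R) (h : IsV g) :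
    detChar χ₁ g = 1 := by
  have hdet : Matrix.GeneralLinearGroup.det g = (1 : Rˣ) := by
    ext
    rw [Matrix.GeneralLinearGroup.val_det_apply,
      Matrix.det_of_lowerTriangular (g : Matrix (Fin n) (Fin n) R) (fun i j hij => h.2 i j hij)]
    simp [h.1]
  rw [detChar, MonoidHom.comp_apply, hdet, MonoidHom.map_one]

lemma detChar_diagGL (χ₁ : Rˣ →* ℂˣ) (d : Fin n → Rˣ) :
    detChar χ₁ (diagGL d) = chiTup χ₁ d := by
  have hdet : Matrix.GeneralLinearGroup.det (diagGL (R := R) d) = ∏ i, d i := by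
    ext
    rw [Matrix.GeneralLinearGroup.val_det_apply]
    show (Matrix.diagonal fun i => (d i : R)).det = _
    rw [Matrix.det_diagonal]
    push_cast
    rfl
  rw [detChar, MonoidHom.comp_apply, hdet, map_prod]
  rfl

lemma twistEquiv_eChi (χ₁ : Rˣ →* ℂˣ) :
    twistEquiv (detChar χ₁) (eChi (n := n) (R := R) (chiTup χ₁)) =
      eChi (1 : (Fin n → Rˣ) →* ℂˣ) := by
  simp only [eChi, _root_.map_smul, map_sum]
  congr 1
  refine Finset.sum_congr rfl fun d _ => ?_
  rw [twistEquiv_of, detChar_diagGL, smul_smul, ← Units.val_mul,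
    inv_mul_cancel, Units.val_one, one_smul, MonoidHom.one_apply, inv_one, Units.val_one,
    one_smul]

lemma map_Vrep (χ₁ : Rˣ →* ℂˣ) :
    (Vrep n R (chiTup χ₁)).map
        ((twistEquiv (detChar (n := n) (R := R) χ₁)).toLinearEquiv : A →ₗ[ℂ] A) =
      Vrep n R 1 := by
  set T := twistEquiv (detChar (n := n) (R := R) χ₁) with hT
  have hTr : T (eAvg (Uset n R) * eAvg (Vset n R) * eChi (chiTup χ₁)) =
      eAvg (Uset n R) * eAvg (Vset n R) * eChi (1 : (Fin n → Rˣ) →* ℂˣ) := by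
    rw [_root_.map_mul, _root_.map_mul, twistEquiv_eAvg _ (Uset n R) (fun g hg => detChar_of_isU χ₁ g hg),
      twistEquiv_eAvg _ (Vset n R) (fun g hg => detChar_of_isV χ₁ g hg), twistEquiv_eChi]
  ext x
  simp only [Submodule.mem_map, Vrep, LinearMap.mem_range, LinearMap.mulRight_apply]
  constructor
  · rintro ⟨z, ⟨w, rfl⟩, rfl⟩
    exact ⟨T w, by rw [show ((T.toLinearEquiv : A →ₗ[ℂ] A) (w * _) : A) = T (w * _) from rfl,
      _root_.map_mul, hTr]⟩
  · rintro ⟨u, rfl⟩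
    exact ⟨T.symm u * (eAvg (Uset n R) * eAvg (Vset n R) * eChi (chiTup χ₁)), ⟨T.symm u, rfl⟩,
      by rw [show ((T.toLinearEquiv : A →ₗ[ℂ] A) _ : A) = T _ from rfl, _root_.map_mul, hTr,
        AlgEquiv.apply_symm_apply]⟩

lemma conj_mem {σ τ : (Fin n → Rˣ) →* ℂˣ} (c : GL (Fin n) R →* ℂˣ) (T : A ≃ₐ[ℂ] A)
    (hT : ∀ g, T (MonoidAlgebra.of ℂ (GL (Fin n) R) g) =
      ((c g : ℂˣ) : ℂ) • MonoidAlgebra.of ℂ (GL (Fin n) R) g)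
    (hmap : (Vrep n R σ).map (T.toLinearEquiv : A →ₗ[ℂ] A) = Vrep n R τ)
    (f : ↥(Vrep n R σ) →ₗ[ℂ] A) (hf : f ∈ HomG n R σ σ) :
    T.toLinearMap ∘ₗ f ∘ₗ (T.toLinearEquiv.ofSubmodules _ _ hmap).symm.toLinearMap
      ∈ HomG n R τ τ := by
  set Ψ := T.toLinearEquiv.ofSubmodules _ _ hmap with hΨ
  refine ⟨fun x => ?_, fun g x y hxy => ?_⟩
  · have h1 : T (f (Ψ.symm x)) ∈ (Vrep n R σ).map (T.toLinearEquiv : A →ₗ[ℂ] A) :=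
      ⟨f (Ψ.symm x), hf.1 (Ψ.symm x), rfl⟩
    rw [hmap] at h1
    exact h1
  · have hsymm : ∀ w : ↥(Vrep n R τ), ((Ψ.symm w : A)) = T.symm (w : A) := fun w => rfl
    have hTsymm_of : T.symm (MonoidAlgebra.of ℂ (GL (Fin n) R) g) =
        (((c g)⁻¹ : ℂˣ) : ℂ) • MonoidAlgebra.of ℂ (GL (Fin n) R) g := by
      apply T.injective
      rw [AlgEquiv.apply_symm_apply, _root_.map_smul, hT, smul_smul, ← Units.val_mul,
        inv_mul_cancel, Units.val_one, one_smul]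
    have h1 : ((Ψ.symm x : A)) =
        (((c g)⁻¹ : ℂˣ) : ℂ) • (MonoidAlgebra.of ℂ (GL (Fin n) R) g * (Ψ.symm y : A)) := by
      rw [hsymm, hsymm, hxy, _root_.map_mul, hTsymm_of, smul_mul_assoc]
    have h3 := hf.2 g ((((c g : ℂˣ) : ℂ)) • Ψ.symm x) (Ψ.symm y)
      (by rw [Submodule.coe_smul, h1, smul_smul, ← Units.val_mul, mul_inv_cancel,
        Units.val_one, one_smul])
    have h4 : f (Ψ.symm x) =
        (((c g)⁻¹ : ℂˣ) : ℂ) • (MonoidAlgebra.of ℂ (GL (Fin n) R) g * f (Ψ.symm y)) := by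
      rw [← h3, _root_.map_smul, smul_smul, ← Units.val_mul, inv_mul_cancel,
        Units.val_one, one_smul]
    show T (f (Ψ.symm x)) = _ * T (f (Ψ.symm y))
    rw [h4, _root_.map_smul, _root_.map_mul, hT, smul_mul_assoc, smul_smul, ← Units.val_mul,
      inv_mul_cancel, Units.val_one, one_smul]

lemma twistEquiv_symm_of (c : GL (Fin n) R →* ℂˣ) (g : GL (Fin n) R) :
    (twistEquiv c).symm (MonoidAlgebra.of ℂ (GL (Fin n) R) g) =
      ((c⁻¹ g : ℂˣ) : ℂ) • MonoidAlgebra.of ℂ (GL (Fin n) R) g := by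
  apply (twistEquiv c).injective
  rw [AlgEquiv.apply_symm_apply, _root_.map_smul, twistEquiv_of, smul_smul, ← Units.val_mul,
    MonoidHom.inv_apply, inv_mul_cancel, Units.val_one, one_smul]

lemma map_Vrep_symm (χ₁ : Rˣ →* ℂˣ) :
    (Vrep n R 1).map
        ((twistEquiv (detChar (n := n) (R := R) χ₁)).symm.toLinearEquiv : A →ₗ[ℂ] A) =
      Vrep n R (chiTup χ₁) := by
  rw [← map_Vrep χ₁, ← Submodule.map_comp]
  have h : ((twistEquiv (detChar (n := n) (R := R) χ₁)).symm.toLinearEquiv : A →ₗ[ℂ] A) ∘ₗ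
      ((twistEquiv (detChar (n := n) (R := R) χ₁)).toLinearEquiv : A →ₗ[ℂ] A) =
      LinearMap.id :=
    LinearMap.ext fun x => (twistEquiv (detChar (n := n) (R := R) χ₁)).symm_apply_apply x
  rw [h, Submodule.map_id]

end TwistAux
set_option synthInstance.maxHeartbeats 1000000 in
set_option maxHeartbeats 1000000 in
open PS in
/-- Lemma 3.10: for `χ = χ₁^{⊗n}`, the map `g ↦ χ₁(det g)·g` extends to an algebra
automorphism of `C[G]` carrying `e_χ e_U e_V C[G] e_U e_V e_χ` onto
`e_L e_U e_V C[G] e_U e_V e_L`; in particular `End_G(i(χ)) ≅ End_G(i(1_L))` as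
`ℂ`-algebras. -/
theorem twist_by_det (n : ℕ) (R : Type*) [CommRing R] [IsLocalRing R]
    [Fintype R] [DecidableEq R] (χ₁ : Rˣ →* ℂˣ) :
    (∃ T : MonoidAlgebra ℂ (GL (Fin n) R) ≃ₐ[ℂ] MonoidAlgebra ℂ (GL (Fin n) R),
      (∀ g : GL (Fin n) R,
        T (MonoidAlgebra.of ℂ (GL (Fin n) R) g) =
          ((χ₁ (Matrix.GeneralLinearGroup.det g) : ℂˣ) : ℂ) •
            MonoidAlgebra.of ℂ (GL (Fin n) R) g) ∧
      T '' {a | ∃ y, a = eChi (chiTup χ₁) * eAvg (Uset n R) * eAvg (Vset n R) * y *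
              eAvg (Uset n R) * eAvg (Vset n R) * eChi (chiTup χ₁)} =
        {a | ∃ y, a = eChi (1 : (Fin n → Rˣ) →* ℂˣ) * eAvg (Uset n R) * eAvg (Vset n R) * y *
              eAvg (Uset n R) * eAvg (Vset n R) * eChi (1 : (Fin n → Rˣ) →* ℂˣ)}) ∧
    ∃ e : ↥(HomG n R (chiTup χ₁) (chiTup χ₁)) ≃ ↥(HomG n R 1 1),
      (∀ x y z : ↥(HomG n R (chiTup χ₁) (chiTup χ₁)),
        (∀ v v' : ↥(Vrep n R (chiTup χ₁)),
          (v' : MonoidAlgebra ℂ (GL (Fin n) R)) = (y : ↥(Vrep n R (chiTup χ₁)) →ₗ[ℂ] MonoidAlgebra ℂ (GL (Fin n) R)) v →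
            (z : ↥(Vrep n R (chiTup χ₁)) →ₗ[ℂ] MonoidAlgebra ℂ (GL (Fin n) R)) v =
              (x : ↥(Vrep n R (chiTup χ₁)) →ₗ[ℂ] MonoidAlgebra ℂ (GL (Fin n) R)) v') →
        ∀ v v' : ↥(Vrep n R 1),
          (v' : MonoidAlgebra ℂ (GL (Fin n) R)) = (e y : ↥(Vrep n R 1) →ₗ[ℂ] MonoidAlgebra ℂ (GL (Fin n) R)) v →
            (e z : ↥(Vrep n R 1) →ₗ[ℂ] MonoidAlgebra ℂ (GL (Fin n) R)) v = (e x : ↥(Vrep n R 1) →ₗ[ℂ] MonoidAlgebra ℂ (GL (Fin n) R)) v') ∧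
      (∀ x y z : ↥(HomG n R (chiTup χ₁) (chiTup χ₁)),
        (z : ↥(Vrep n R (chiTup χ₁)) →ₗ[ℂ] MonoidAlgebra ℂ (GL (Fin n) R)) =
            (x : ↥(Vrep n R (chiTup χ₁)) →ₗ[ℂ] MonoidAlgebra ℂ (GL (Fin n) R)) +
              (y : ↥(Vrep n R (chiTup χ₁)) →ₗ[ℂ] MonoidAlgebra ℂ (GL (Fin n) R)) →
        (e z : ↥(Vrep n R 1) →ₗ[ℂ] MonoidAlgebra ℂ (GL (Fin n) R)) =
          (e x : ↥(Vrep n R 1) →ₗ[ℂ] MonoidAlgebra ℂ (GL (Fin n) R)) + (e y : ↥(Vrep n R 1) →ₗ[ℂ] MonoidAlgebra ℂ (GL (Fin n) R))) ∧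
      ∀ (c : ℂ) (x z : ↥(HomG n R (chiTup χ₁) (chiTup χ₁))),
        (z : ↥(Vrep n R (chiTup χ₁)) →ₗ[ℂ] MonoidAlgebra ℂ (GL (Fin n) R)) =
            c • (x : ↥(Vrep n R (chiTup χ₁)) →ₗ[ℂ] MonoidAlgebra ℂ (GL (Fin n) R)) →
        (e z : ↥(Vrep n R 1) →ₗ[ℂ] MonoidAlgebra ℂ (GL (Fin n) R)) = c • (e x : ↥(Vrep n R 1) →ₗ[ℂ] MonoidAlgebra ℂ (GL (Fin n) R)) := by

  classical
  have hT_of : ∀ g : GL (Fin n) R,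
      TwistAux.twistEquiv (TwistAux.detChar (n := n) (R := R) χ₁)
        (MonoidAlgebra.of ℂ (GL (Fin n) R) g) =
      ((TwistAux.detChar (n := n) (R := R) χ₁ g : ℂˣ) : ℂ) •
        MonoidAlgebra.of ℂ (GL (Fin n) R) g :=
    TwistAux.twistEquiv_of _
  set c := TwistAux.detChar (n := n) (R := R) χ₁ with hc
  set T := TwistAux.twistEquiv c with hTdef
  have hU := TwistAux.twistEquiv_eAvg c (Uset n R)
    (fun g hg => TwistAux.detChar_of_isU χ₁ g hg)
  have hV := TwistAux.twistEquiv_eAvg c (Vset n R)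
    (fun g hg => TwistAux.detChar_of_isV χ₁ g hg)
  have hChi := TwistAux.twistEquiv_eChi (n := n) (R := R) χ₁
  constructor
  · refine ⟨T, fun g => hT_of g, ?_⟩
    ext a
    simp only [Set.mem_image, Set.mem_setOf_eq]
    constructor
    · rintro ⟨b, ⟨y, rfl⟩, rfl⟩
      refine ⟨T y, ?_⟩
      simp only [_root_.map_mul]
      rw [hU, hV, hChi]
    · rintro ⟨y, rfl⟩
      refine ⟨eChi (chiTup χ₁) * eAvg (Uset n R) * eAvg (Vset n R) * T.symm y *
        eAvg (Uset n R) * eAvg (Vset n R) * eChi (chiTup χ₁), ⟨T.symm y, rfl⟩, ?_⟩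
      simp only [_root_.map_mul]
      rw [hU, hV, hChi, AlgEquiv.apply_symm_apply]
  · have hmap := TwistAux.map_Vrep (n := n) (R := R) χ₁
    have hmap' := TwistAux.map_Vrep_symm (n := n) (R := R) χ₁
    have hTsymm_of : ∀ g : GL (Fin n) R,
        T.symm (MonoidAlgebra.of ℂ (GL (Fin n) R) g) =
        ((c⁻¹ g : ℂˣ) : ℂ) • MonoidAlgebra.of ℂ (GL (Fin n) R) g :=
      TwistAux.twistEquiv_symm_of c
    set Ψ := T.toLinearEquiv.ofSubmodules _ _ hmap with hΨ
    set Ψ' := T.symm.toLinearEquiv.ofSubmodules _ _ hmap' with hΨ'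
    have hΨsymm : ∀ w : ↥(Vrep n R 1), ((Ψ.symm w : MonoidAlgebra ℂ (GL (Fin n) R))) =
        T.symm (w : MonoidAlgebra ℂ (GL (Fin n) R)) := fun w => rfl
    have hΨ'symm : ∀ w : ↥(Vrep n R (chiTup χ₁)),
        ((Ψ'.symm w : MonoidAlgebra ℂ (GL (Fin n) R))) =
        T (w : MonoidAlgebra ℂ (GL (Fin n) R)) := fun w => rfl
    have hkey : ∀ v : ↥(Vrep n R (chiTup χ₁)), Ψ.symm (Ψ'.symm v) = v := by
      intro v
      apply Subtype.ext
      rw [hΨsymm, hΨ'symm, AlgEquiv.symm_apply_apply]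
    have hkey' : ∀ v : ↥(Vrep n R 1), Ψ'.symm (Ψ.symm v) = v := by
      intro v
      apply Subtype.ext
      rw [hΨ'symm, hΨsymm, AlgEquiv.apply_symm_apply]
    refine ⟨{ toFun := fun f => ⟨T.toLinearMap ∘ₗ (f : _ →ₗ[ℂ] _) ∘ₗ Ψ.symm.toLinearMap,
                TwistAux.conj_mem c T hT_of hmap _ f.2⟩
              invFun := fun f => ⟨T.symm.toLinearMap ∘ₗ (f : _ →ₗ[ℂ] _) ∘ₗ Ψ'.symm.toLinearMap,
                TwistAux.conj_mem c⁻¹ T.symm hTsymm_of hmap' _ f.2⟩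
              left_inv := ?_
              right_inv := ?_ }, ?_, ?_, ?_⟩
    · intro f
      apply Subtype.ext
      refine LinearMap.ext fun v => ?_
      show T.symm (T ((f : _ →ₗ[ℂ] _) (Ψ.symm (Ψ'.symm v)))) = (f : _ →ₗ[ℂ] _) v
      rw [hkey, AlgEquiv.symm_apply_apply]
    · intro f
      apply Subtype.ext
      refine LinearMap.ext fun v => ?_
      show T (T.symm ((f : _ →ₗ[ℂ] _) (Ψ'.symm (Ψ.symm v)))) = (f : _ →ₗ[ℂ] _) v
      rw [hkey', AlgEquiv.apply_symm_apply]
    · intro x y z H v v' hvv'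
      show T ((z : _ →ₗ[ℂ] _) (Ψ.symm v)) = T ((x : _ →ₗ[ℂ] _) (Ψ.symm v'))
      refine congrArg T (H (Ψ.symm v) (Ψ.symm v') ?_)
      rw [hΨsymm, hvv']
      show T.symm (T ((y : _ →ₗ[ℂ] _) (Ψ.symm v))) = _
      rw [AlgEquiv.symm_apply_apply]
    · intro x y z hz
      refine LinearMap.ext fun v => ?_
      show T ((z : _ →ₗ[ℂ] _) (Ψ.symm v)) =
        (T.toLinearMap ∘ₗ (x : _ →ₗ[ℂ] _) ∘ₗ Ψ.symm.toLinearMap +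
          T.toLinearMap ∘ₗ (y : _ →ₗ[ℂ] _) ∘ₗ Ψ.symm.toLinearMap) v
      rw [hz, LinearMap.add_apply, _root_.map_add]
      rfl
    · intro a x z hz
      refine LinearMap.ext fun v => ?_
      show T ((z : _ →ₗ[ℂ] _) (Ψ.symm v)) =
        (a • (T.toLinearMap ∘ₗ (x : _ →ₗ[ℂ] _) ∘ₗ Ψ.symm.toLinearMap)) v
      rw [hz, LinearMap.smul_apply, _root_.map_smul]
      rfl
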